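/- For every finite n ≥ 1, the equivalence relation F_n is a Π^0_{n+2} subset of the space X_n × X_n (where X_n carries the subspace topology from ((2^ℕ)^ℕ)^n and X_n × X_n the product topology). -/
import Mathlib


open MeasureTheory

/-- Iterated powerset type over Cantor space: `It 0 = 2^ℕ`, `It (m+1) = Set (It m)`. -/
def It : ℕ → Type
  | 0 => ℕ → Bool
  | m + 1 => Set (It m)

/-- `aF x m l` is the set `a^{x,l}_{m+1}` from the recursive construction. -/
def aF (x : ℕ → ℕ → ℕ → Bool) : (m : ℕ) → ℕ → It (m + 1)
  | 0, l => {z : It 0 | ∃ k, x 1 l k = true ∧ z = x 0 k}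
  | m + 1, l => {z : It (m + 1) | ∃ k, x (m + 2) l k = true ∧ z = aF x m k}

/-- `AS x m` is the set `A^x_{m+1}` from the recursive construction. -/
def AS (x : ℕ → ℕ → ℕ → Bool) : (m : ℕ) → It (m + 1)
  | 0 => {z : It 0 | ∃ k, z = x 0 k}
  | m + 1 => {z : It (m + 1) | ∃ k, z = aF x m k}

/-- Extension of a finite tuple to an infinite sequence, by a junk value. -/
def extFin {n : ℕ} (x : Fin n → ℕ → ℕ → Bool) : ℕ → ℕ → ℕ → Bool :=
  fun i => if h : i < n then x ⟨i, h⟩ else fun _ _ => true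

/-- The domain `X_n ⊆ ((2^ℕ)^ℕ)^n`. -/
def XSet (n : ℕ) : Set (Fin n → ℕ → ℕ → Bool) :=
  {x | ∀ (i : ℕ) (_ : 1 ≤ i) (hn : i < n),
    (∀ m, ∃ k, x ⟨i, hn⟩ k m = true) ∧
    (∀ k, ∃ m, x ⟨i, hn⟩ k m = true) ∧
    (∀ k l₁ l₂,
      x ⟨i - 1, Nat.lt_of_le_of_lt (Nat.sub_le i 1) hn⟩ l₁ =
        x ⟨i - 1, Nat.lt_of_le_of_lt (Nat.sub_le i 1) hn⟩ l₂ →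
      x ⟨i, hn⟩ k l₁ = x ⟨i, hn⟩ k l₂)}

/-- The domain `X_ω ⊆ ((2^ℕ)^ℕ)^ω`. -/
def XInf : Set (ℕ → ℕ → ℕ → Bool) :=
  {x | ∀ (i : ℕ) (_ : 1 ≤ i),
    (∀ m, ∃ k, x i k m = true) ∧
    (∀ k, ∃ m, x i k m = true) ∧
    (∀ k l₁ l₂, x (i - 1) l₁ = x (i - 1) l₂ → x i k l₁ = x i k l₂)}

/-- The relation `F_n` (`x F_n y ↔ A^x_n = A^y_n`), as a relation on the ambient space.
For `n = 0` this is the trivial (full) relation. -/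
def Ffin (n : ℕ) (x y : Fin n → ℕ → ℕ → Bool) : Prop :=
  AS (extFin x) (n - 1) = AS (extFin y) (n - 1)

/-- The relation `F_ω` : `x F_ω y ↔ ∀ k ≥ 1, A^x_k = A^y_k`. -/
def Fomega (x y : ℕ → ℕ → ℕ → Bool) : Prop :=
  ∀ m, AS x m = AS y m

/-- The projection `u^n_k` to the first `k` coordinates. -/
def projFin {n : ℕ} (k : ℕ) (h : k ≤ n) (x : Fin n → ℕ → ℕ → Bool) :
    Fin k → ℕ → ℕ → Bool :=
  fun i => x (Fin.castLE h i)

/-- The projection `u^ω_k` to the first `k` coordinates. -/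
def projInf (k : ℕ) (x : ℕ → ℕ → ℕ → Bool) : Fin k → ℕ → ℕ → Bool :=
  fun i => x i.val

theorem projFin_mem {n k : ℕ} (h : k ≤ n) {x : Fin n → ℕ → ℕ → Bool}
    (hx : x ∈ XSet n) : projFin k h x ∈ XSet k :=
  fun i h1 hik => hx i h1 (lt_of_lt_of_le hik h)

theorem projInf_mem (k : ℕ) {x : ℕ → ℕ → ℕ → Bool} (hx : x ∈ XInf) :
    projInf k x ∈ XSet k :=
  fun i h1 _ => hx i h1

def projSubFin {n : ℕ} (k : ℕ) (h : k ≤ n) (x : ↥(XSet n)) : ↥(XSet k) :=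
  ⟨projFin k h x.1, projFin_mem h x.2⟩

def projSubInf (k : ℕ) (x : ↥XInf) : ↥(XSet k) :=
  ⟨projInf k x.1, projInf_mem k x.2⟩

/-- The domains of the iterated Friedman–Stanley jumps. -/
def fsSpace : ℕ → Type
  | 0 => ℕ → Bool
  | n + 1 => ℕ → fsSpace n

/-- The Friedman–Stanley jump of an equivalence relation. -/
def fsJump {X : Type} (E : X → X → Prop) (x y : ℕ → X) : Prop :=
  (∀ n, ∃ m, E (x n) (y m)) ∧ (∀ n, ∃ m, E (y n) (x m))

/-- The iterated Friedman–Stanley jump `=^{+n}`. -/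
def fsIter : (n : ℕ) → fsSpace n → fsSpace n → Prop
  | 0 => Eq
  | n + 1 => fsJump (fsIter n)

instance fsSpaceTopologicalSpace : (n : ℕ) → TopologicalSpace (fsSpace n)
  | 0 => inferInstanceAs (TopologicalSpace (ℕ → Bool))
  | n + 1 =>
    letI := fsSpaceTopologicalSpace n
    inferInstanceAs (TopologicalSpace (ℕ → fsSpace n))

instance fsSpaceMeasurableSpace : (n : ℕ) → MeasurableSpace (fsSpace n)
  | 0 => inferInstanceAs (MeasurableSpace (ℕ → Bool))
  | n + 1 =>
    letI := fsSpaceMeasurableSpace n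
    inferInstanceAs (MeasurableSpace (ℕ → fsSpace n))

/-- `=^{+ω}`, the product of the `=^{+k}`. -/
def fsOmega (x y : ∀ k, fsSpace k) : Prop :=
  ∀ k, fsIter k (x k) (y k)

/-- Borel reducibility of equivalence relations. -/
def BorelReducible {X Y : Type*} [MeasurableSpace X] [MeasurableSpace Y]
    (E : X → X → Prop) (F : Y → Y → Prop) : Prop :=
  ∃ f : X → Y, Measurable f ∧ ∀ a b, E a b ↔ F (f a) (f b)

/-- The Polish topology of pointwise convergence on the symmetric group of a
(countable, discrete) set. -/
def permTopology (A : Type*) : TopologicalSpace (Equiv.Perm A) :=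
  TopologicalSpace.induced (fun g => (g : A → A))
    (@Pi.topologicalSpace A (fun _ => A) fun _ => ⊥)

/-- The orbit equivalence relation of an action. -/
def OrbitRel {G Y : Type*} (act : G → Y → Y) (y₁ y₂ : Y) : Prop :=
  ∃ g, act g y₁ = y₂

/-- Classifiable by countable structures: Borel reducible to the orbit equivalence
relation of a continuous action of `S_∞` on a Polish space. -/
def ClassifiableByCountableStructures {X : Type*} [MeasurableSpace X]
    (E : X → X → Prop) : Prop :=
  ∃ (Y : Type) (_ : TopologicalSpace Y) (_ : MeasurableSpace Y),
    PolishSpace Y ∧ BorelSpace Y ∧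
    ∃ act : Equiv.Perm ℕ → Y → Y,
      (∀ y, act 1 y = y) ∧
      (∀ g h y, act (g * h) y = act g (act h y)) ∧
      (letI := permTopology ℕ
       Continuous fun p : Equiv.Perm ℕ × Y => act p.1 p.2) ∧
      BorelReducible E (OrbitRel act)

/-- `E` is prime to `F`. -/
def PrimeTo {X Y : Type*} [MeasurableSpace X] [MeasurableSpace Y]
    (E : X → X → Prop) (F : Y → Y → Prop) : Prop :=
  ∀ f : X → Y, Measurable f → (∀ a b, E a b → F (f a) (f b)) →
    ∃ y : Y, BorelReducible E (fun a b : {x : X // F (f x) y} => E a.1 b.1)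

/-- A sequence of elements of Cantor space is separated if any two distinct naturals
are separated by some member of the sequence. -/
def SeqSeparated (z : ℕ → ℕ → Bool) : Prop :=
  ∀ a b : ℕ, a ≠ b → ∃ i, z i a ≠ z i b

/-- `SigmaPointclass α m` is the pointclass `Σ^0_{m+1}` on the space `α`:
`Σ^0_1` is the open sets, and `Σ^0_{m+2}` consists of countable unions of
complements of `Σ^0_{m+1}` sets. -/
def SigmaPointclass (α : Type*) [TopologicalSpace α] : ℕ → Set (Set α)
  | 0 => {s | IsOpen s}
  | m + 1 => {s | ∃ f : ℕ → Set α, (∀ k, (f k)ᶜ ∈ SigmaPointclass α m) ∧ s = ⋃ k, f k}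

/-- `PiPointclass α m` is the pointclass `Π^0_{m+1}`, the complements of
`Σ^0_{m+1}` sets. -/
def PiPointclass (α : Type*) [TopologicalSpace α] (m : ℕ) : Set (Set α) :=
  {s | sᶜ ∈ SigmaPointclass α m}

-- auxiliary development
def itSet {m : ℕ} (a : It (m+1)) : Set (It m) := a

theorem itSet_inj {m : ℕ} {a b : It (m+1)} (h : itSet a = itSet b) : a = b := h

theorem mem_aF_zero {Y : ℕ → ℕ → ℕ → Bool} {l : ℕ} {z : It 0} :
    z ∈ itSet (aF Y 0 l) ↔ ∃ k, Y 1 l k = true ∧ z = Y 0 k := Iff.rfl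

theorem mem_aF_succ {Y : ℕ → ℕ → ℕ → Bool} {m l : ℕ} {z : It (m+1)} :
    z ∈ itSet (aF Y (m+1) l) ↔ ∃ k, Y (m+2) l k = true ∧ z = aF Y m k := Iff.rfl

theorem mem_AS_zero {Y : ℕ → ℕ → ℕ → Bool} {z : It 0} :
    z ∈ itSet (AS Y 0) ↔ ∃ k, z = Y 0 k := Iff.rfl

theorem mem_AS_succ {Y : ℕ → ℕ → ℕ → Bool} {m : ℕ} {z : It (m+1)} :
    z ∈ itSet (AS Y (m+1)) ↔ ∃ k, z = aF Y m k := Iff.rfl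

def Cond (X : ℕ → ℕ → ℕ → Bool) (i : ℕ) : Prop :=
  (∀ m, ∃ k, X i k m = true) ∧ (∀ k, ∃ m, X i k m = true) ∧
  (∀ k l₁ l₂, X (i-1) l₁ = X (i-1) l₂ → X i k l₁ = X i k l₂)

theorem cond_of_mem {n : ℕ} {x : Fin n → ℕ → ℕ → Bool} (hx : x ∈ XSet n)
    {i : ℕ} (h1 : 1 ≤ i) (h2 : i < n) : Cond (extFin x) i := by
  obtain ⟨c1, c2, c3⟩ := hx i h1 h2
  have e1 : extFin x i = x ⟨i, h2⟩ := dif_pos h2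
  have e2 : extFin x (i-1) = x ⟨i-1, Nat.lt_of_le_of_lt (Nat.sub_le i 1) h2⟩ := dif_pos _
  exact ⟨by rw [e1]; exact c1, by rw [e1]; exact c2, by rw [e1, e2]; exact c3⟩

theorem bool_eq_of_iff {a b : Bool} (h : a = true ↔ b = true) : a = b := by
  cases a <;> cases b <;> simp_all

theorem canon (Y : ℕ → ℕ → ℕ → Bool) :
    ∀ m, (∀ i, 1 ≤ i → i ≤ m+1 → Cond Y i) → ∀ j j', aF Y m j = aF Y m j' →
      Y (m+1) j = Y (m+1) j' := by
  intro m
  induction m with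
  | zero =>
    intro hc j j' h
    have c3 := (hc 1 le_rfl le_rfl).2.2
    have key : ∀ a b, itSet (aF Y 0 a) = itSet (aF Y 0 b) →
        ∀ i, Y 1 a i = true → Y 1 b i = true := by
      intro a b hab i hi
      have hm : Y 0 i ∈ itSet (aF Y 0 a) := ⟨i, hi, rfl⟩
      rw [hab] at hm
      obtain ⟨k, hk1, hk2⟩ := hm
      rw [c3 b i k hk2]; exact hk1
    have h' := congrArg itSet h
    funext i
    exact bool_eq_of_iff ⟨key j j' h' i, key j' j h'.symm i⟩
  | succ m ih =>
    intro hc j j' h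
    have hc' : ∀ i, 1 ≤ i → i ≤ m+1 → Cond Y i := fun i a b => hc i a (b.trans (Nat.le_succ _))
    have c3 := (hc (m+2) (by omega) le_rfl).2.2
    have key : ∀ a b, itSet (aF Y (m+1) a) = itSet (aF Y (m+1) b) →
        ∀ i, Y (m+2) a i = true → Y (m+2) b i = true := by
      intro a b hab i hi
      have hm : aF Y m i ∈ itSet (aF Y (m+1) a) := ⟨i, hi, rfl⟩
      rw [hab] at hm
      obtain ⟨k, hk1, hk2⟩ := hm
      have := ih hc' i k hk2
      rw [c3 b i k this]; exact hk1
    have h' := congrArg itSet h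
    funext i
    exact bool_eq_of_iff ⟨key j j' h' i, key j' j h'.symm i⟩

theorem AS_eq_union (X : ℕ → ℕ → ℕ → Bool) (m : ℕ) (hc : Cond X (m+1)) :
    itSet (AS X m) = {z | ∃ a ∈ itSet (AS X (m+1)), z ∈ itSet a} := by
  obtain ⟨c1, -, -⟩ := hc
  cases m with
  | zero =>
    ext z
    simp only [Set.mem_setOf_eq, mem_AS_zero, mem_AS_succ]
    constructor
    · rintro ⟨k, rfl⟩
      obtain ⟨l, hl⟩ := c1 k
      exact ⟨aF X 0 l, ⟨l, rfl⟩, ⟨k, hl, rfl⟩⟩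
    · rintro ⟨a, ⟨l, rfl⟩, hz⟩
      obtain ⟨k, -, hk⟩ := mem_aF_zero.1 hz
      exact ⟨k, hk⟩
  | succ m =>
    ext z
    simp only [Set.mem_setOf_eq, mem_AS_succ]
    constructor
    · rintro ⟨k, rfl⟩
      obtain ⟨l, hl⟩ := c1 k
      exact ⟨aF X (m+1) l, ⟨l, rfl⟩, ⟨k, hl, rfl⟩⟩
    · rintro ⟨a, ⟨l, rfl⟩, hz⟩
      obtain ⟨k, -, hk⟩ := mem_aF_succ.1 hz
      exact ⟨k, hk⟩

theorem AS_down {X Y : ℕ → ℕ → ℕ → Bool} {m : ℕ} (hcX : Cond X (m+1)) (hcY : Cond Y (m+1))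
    (h : AS X (m+1) = AS Y (m+1)) : AS X m = AS Y m := by
  apply itSet_inj
  rw [AS_eq_union X m hcX, AS_eq_union Y m hcY, congrArg itSet h]

def Q (X Y : ℕ → ℕ → ℕ → Bool) : ℕ → ℕ → ℕ → Prop
  | 0, k, l =>
      (∀ i, X 1 k i = true → ∀ j, Y 0 j = X 0 i → Y 1 l j = true) ∧
      (∀ j, Y 1 l j = true → ∀ i, X 0 i = Y 0 j → X 1 k i = true)
  | m+1, k, l =>
      (∀ i, X (m+2) k i = true → ∀ j, Q X Y m i j → Y (m+2) l j = true) ∧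
      (∀ j, Y (m+2) l j = true → ∀ i, Q X Y m i j → X (m+2) k i = true)

theorem Q_iff (X Y : ℕ → ℕ → ℕ → Bool) :
    ∀ m, (∀ i, 1 ≤ i → i ≤ m+1 → Cond X i) → (∀ i, 1 ≤ i → i ≤ m+1 → Cond Y i) →
      AS X m = AS Y m → ∀ k l, (Q X Y m k l ↔ aF X m k = aF Y m l) := by
  intro m
  induction m with
  | zero =>
    intro hcX hcY hAS k l
    have hAS' := congrArg itSet hAS
    have c3X := (hcX 1 le_rfl le_rfl).2.2
    have c3Y := (hcY 1 le_rfl le_rfl).2.2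
    constructor
    · rintro ⟨q1, q2⟩
      apply itSet_inj; ext z
      simp only [mem_aF_zero]
      constructor
      · rintro ⟨i, hi, rfl⟩
        have hm : X 0 i ∈ itSet (AS X 0) := ⟨i, rfl⟩
        rw [hAS'] at hm
        obtain ⟨j, hj⟩ := hm
        exact ⟨j, q1 i hi j hj.symm, hj⟩
      · rintro ⟨j, hj, rfl⟩
        have hm : Y 0 j ∈ itSet (AS Y 0) := ⟨j, rfl⟩
        rw [← hAS'] at hm
        obtain ⟨i, hi⟩ := hm
        exact ⟨i, q2 j hj i hi.symm, hi⟩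
    · intro h
      have h' := congrArg itSet h
      refine ⟨?_, ?_⟩
      · intro i hi j hj
        have hm : X 0 i ∈ itSet (aF X 0 k) := ⟨i, hi, rfl⟩
        rw [h'] at hm
        obtain ⟨j', h1, h2⟩ := hm
        rw [c3Y l j j' (hj.trans h2)]
        exact h1
      · intro j hj i hi
        have hm : Y 0 j ∈ itSet (aF Y 0 l) := ⟨j, hj, rfl⟩
        rw [← h'] at hm
        obtain ⟨i', h1, h2⟩ := hm
        rw [c3X k i i' (hi.trans h2)]
        exact h1
  | succ m ih =>
    intro hcX hcY hAS k l
    have hcX' : ∀ i, 1 ≤ i → i ≤ m+1 → Cond X i := fun i a b => hcX i a (b.trans (Nat.le_succ _))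
    have hcY' : ∀ i, 1 ≤ i → i ≤ m+1 → Cond Y i := fun i a b => hcY i a (b.trans (Nat.le_succ _))
    have hAS0 : AS X m = AS Y m :=
      AS_down (hcX (m+1) (by omega) (by omega)) (hcY (m+1) (by omega) (by omega)) hAS
    have ihm := ih hcX' hcY' hAS0
    have hAS' := congrArg itSet hAS
    have c3X := (hcX (m+2) (by omega) le_rfl).2.2
    have c3Y := (hcY (m+2) (by omega) le_rfl).2.2
    constructor
    · rintro ⟨q1, q2⟩
      apply itSet_inj; ext z
      simp only [mem_aF_succ]
      constructor
      · rintro ⟨i, hi, rfl⟩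
        have hz : aF X m i ∈ itSet (AS X (m+1)) := ⟨i, rfl⟩
        rw [hAS'] at hz
        obtain ⟨j, hj⟩ := hz
        exact ⟨j, q1 i hi j ((ihm i j).2 hj), hj⟩
      · rintro ⟨j, hj, rfl⟩
        have hz : aF Y m j ∈ itSet (AS Y (m+1)) := ⟨j, rfl⟩
        rw [← hAS'] at hz
        obtain ⟨i, hi⟩ := hz
        exact ⟨i, q2 j hj i ((ihm i j).2 hi.symm), hi⟩
    · intro h
      have h' := congrArg itSet h
      have canY := canon Y m hcY'
      have canX := canon X m hcX'
      refine ⟨?_, ?_⟩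
      · intro i hi j hQ
        have hz : aF X m i ∈ itSet (aF X (m+1) k) := ⟨i, hi, rfl⟩
        rw [h'] at hz
        obtain ⟨j', h1, h2⟩ := hz
        have hq : aF X m i = aF Y m j := (ihm i j).1 hQ
        rw [c3Y l j j' (canY j j' (hq.symm.trans h2))]
        exact h1
      · intro j hj i hQ
        have hz : aF Y m j ∈ itSet (aF Y (m+1) l) := ⟨j, hj, rfl⟩
        rw [← h'] at hz
        obtain ⟨i', h1, h2⟩ := hz
        have hq : aF X m i = aF Y m j := (ihm i j).1 hQ
        rw [c3X k i i' (canX i i' (hq.trans h2))]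
        exact h1

theorem AS0_iff {X Y : ℕ → ℕ → ℕ → Bool} :
    AS X 0 = AS Y 0 ↔ ((∀ k, ∃ l, Y 0 l = X 0 k) ∧ (∀ l, ∃ k, X 0 k = Y 0 l)) := by
  constructor
  · intro h
    have h' := congrArg itSet h
    constructor
    · intro k
      have hm : X 0 k ∈ itSet (AS X 0) := ⟨k, rfl⟩
      rw [h'] at hm
      obtain ⟨l, hl⟩ := hm
      exact ⟨l, hl.symm⟩
    · intro l
      have hm : Y 0 l ∈ itSet (AS Y 0) := ⟨l, rfl⟩
      rw [← h'] at hm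
      obtain ⟨k, hk⟩ := hm
      exact ⟨k, hk.symm⟩
  · rintro ⟨h1, h2⟩
    apply itSet_inj; ext z
    simp only [mem_AS_zero]
    constructor
    · rintro ⟨k, rfl⟩
      obtain ⟨l, hl⟩ := h1 k
      exact ⟨l, hl.symm⟩
    · rintro ⟨l, rfl⟩
      obtain ⟨k, hk⟩ := h2 l
      exact ⟨k, hk.symm⟩

theorem main_iff {n : ℕ} (hn : 1 ≤ n) {x y : Fin n → ℕ → ℕ → Bool}
    (hx : x ∈ XSet n) (hy : y ∈ XSet n) :
    Ffin n x y ↔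
      (((∀ k, ∃ l, extFin y 0 l = extFin x 0 k) ∧ (∀ l, ∃ k, extFin x 0 k = extFin y 0 l)) ∧
        ∀ m, m < n - 1 →
          ((∀ k, ∃ l, Q (extFin x) (extFin y) m k l) ∧
           (∀ l, ∃ k, Q (extFin x) (extFin y) m k l))) := by
  have hcX : ∀ i, 1 ≤ i → i ≤ n-1 → Cond (extFin x) i :=
    fun i a b => cond_of_mem hx a (by omega)
  have hcY : ∀ i, 1 ≤ i → i ≤ n-1 → Cond (extFin y) i :=
    fun i a b => cond_of_mem hy a (by omega)
  unfold Ffin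
  constructor
  · intro htop
    have all_eq : ∀ j, j ≤ n-1 → AS (extFin x) (n-1-j) = AS (extFin y) (n-1-j) := by
      intro j
      induction j with
      | zero => intro _; exact htop
      | succ j ihj =>
        intro hj
        have h1 := ihj (by omega)
        have e : n-1-j = (n-1-(j+1)) + 1 := by omega
        rw [e] at h1
        exact AS_down (hcX _ (by omega) (by omega)) (hcY _ (by omega) (by omega)) h1
    have all_eq' : ∀ m, m ≤ n-1 → AS (extFin x) m = AS (extFin y) m := by
      intro m hm
      have h := all_eq (n-1-m) (by omega)
      rwa [show n-1-(n-1-m) = m by omega] at h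
    refine ⟨AS0_iff.1 (all_eq' 0 (by omega)), ?_⟩
    intro m hm
    have e1 := all_eq' m (by omega)
    have e2 := all_eq' (m+1) (by omega)
    have qi := Q_iff (extFin x) (extFin y) m (fun i a b => hcX i a (by omega))
      (fun i a b => hcY i a (by omega)) e1
    have e2' := congrArg itSet e2
    constructor
    · intro k
      have hz : aF (extFin x) m k ∈ itSet (AS (extFin x) (m+1)) := ⟨k, rfl⟩
      rw [e2'] at hz
      obtain ⟨l, hl⟩ := hz
      exact ⟨l, (qi k l).2 hl⟩
    · intro l
      have hz : aF (extFin y) m l ∈ itSet (AS (extFin y) (m+1)) := ⟨l, rfl⟩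
      rw [← e2'] at hz
      obtain ⟨k, hk⟩ := hz
      exact ⟨k, (qi k l).2 hk.symm⟩
  · rintro ⟨h0, hS⟩
    have up : ∀ m, m ≤ n-1 → AS (extFin x) m = AS (extFin y) m := by
      intro m
      induction m with
      | zero => exact fun _ => AS0_iff.2 h0
      | succ m ihm =>
        intro hm
        have e1 := ihm (by omega)
        obtain ⟨s1, s2⟩ := hS m (by omega)
        have qi := Q_iff (extFin x) (extFin y) m (fun i a b => hcX i a (by omega))
          (fun i a b => hcY i a (by omega)) e1
        apply itSet_inj; ext z
        simp only [mem_AS_succ]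
        constructor
        · rintro ⟨k, rfl⟩
          obtain ⟨l, hq⟩ := s1 k
          exact ⟨l, (qi k l).1 hq⟩
        · rintro ⟨l, rfl⟩
          obtain ⟨k, hq⟩ := s2 l
          exact ⟨k, ((qi k l).1 hq).symm⟩
    exact up (n-1) le_rfl


section Pointclass
variable {α : Type*} [TopologicalSpace α]

theorem clopen_sigma {s : Set α} (h : IsClopen s) : ∀ m, s ∈ SigmaPointclass α m
  | 0 => h.isOpen
  | m+1 => ⟨fun _ => s, fun _ => clopen_sigma h.compl m, (Set.iUnion_const s).symm⟩

theorem clopen_pi {s : Set α} (h : IsClopen s) (m : ℕ) : s ∈ PiPointclass α m :=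
  clopen_sigma h.compl m

theorem sigma_iUnion {m : ℕ} {f : ℕ → Set α} (h : ∀ k, f k ∈ SigmaPointclass α m) :
    (⋃ k, f k) ∈ SigmaPointclass α m := by
  cases m with
  | zero => exact isOpen_iUnion h
  | succ m =>
    simp only [SigmaPointclass, Set.mem_setOf_eq] at h
    choose g hg he using h
    refine ⟨fun c => g c.unpair.1 c.unpair.2, fun c => hg _ _, ?_⟩
    ext z
    simp only [Set.mem_iUnion]
    constructor
    · rintro ⟨k, hk⟩
      rw [he k] at hk
      obtain ⟨j, hj⟩ := Set.mem_iUnion.1 hk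
      exact ⟨Nat.pair k j, by simpa [Nat.unpair_pair] using hj⟩
    · rintro ⟨c, hc⟩
      refine ⟨c.unpair.1, ?_⟩
      rw [he c.unpair.1]
      exact Set.mem_iUnion.2 ⟨c.unpair.2, hc⟩

theorem sigma_union {m : ℕ} {s t : Set α} (hs : s ∈ SigmaPointclass α m)
    (ht : t ∈ SigmaPointclass α m) : s ∪ t ∈ SigmaPointclass α m := by
  have e : s ∪ t = ⋃ k : ℕ, (if k = 0 then s else t) := by
    ext z
    simp only [Set.mem_union, Set.mem_iUnion]
    constructor
    · rintro (h | h)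
      · exact ⟨0, by simpa⟩
      · exact ⟨1, by simpa⟩
    · rintro ⟨k, hk⟩
      split_ifs at hk
      · exact Or.inl hk
      · exact Or.inr hk
  rw [e]
  exact sigma_iUnion fun k => by split_ifs <;> assumption

theorem sigma_inter {m : ℕ} {s t : Set α} (hs : s ∈ SigmaPointclass α m)
    (ht : t ∈ SigmaPointclass α m) : s ∩ t ∈ SigmaPointclass α m := by
  cases m with
  | zero => exact hs.inter ht
  | succ m =>
    obtain ⟨f, hf, rfl⟩ := hs
    obtain ⟨g, hg, rfl⟩ := ht
    refine ⟨fun c => f c.unpair.1 ∩ g c.unpair.2, fun c => ?_, ?_⟩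
    · rw [Set.compl_inter]
      exact sigma_union (hf _) (hg _)
    · ext z
      simp only [Set.mem_inter_iff, Set.mem_iUnion]
      constructor
      · rintro ⟨⟨a, ha⟩, ⟨b, hb⟩⟩
        exact ⟨Nat.pair a b, by simp [Nat.unpair_pair, ha, hb]⟩
      · rintro ⟨c, hc1, hc2⟩
        exact ⟨⟨_, hc1⟩, ⟨_, hc2⟩⟩

theorem pi_iInter {m : ℕ} {f : ℕ → Set α} (h : ∀ k, f k ∈ PiPointclass α m) :
    (⋂ k, f k) ∈ PiPointclass α m := by
  unfold PiPointclass
  rw [Set.mem_setOf_eq, Set.compl_iInter]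
  exact sigma_iUnion h

theorem pi_inter {m : ℕ} {s t : Set α} (hs : s ∈ PiPointclass α m)
    (ht : t ∈ PiPointclass α m) : s ∩ t ∈ PiPointclass α m := by
  unfold PiPointclass
  rw [Set.mem_setOf_eq, Set.compl_inter]
  exact sigma_union hs ht

theorem pi_union_clopen {m : ℕ} {c s : Set α} (hc : IsClopen c)
    (hs : s ∈ PiPointclass α m) : c ∪ s ∈ PiPointclass α m := by
  unfold PiPointclass
  rw [Set.mem_setOf_eq, Set.compl_union]
  exact sigma_inter (clopen_sigma hc.compl m) hs

theorem sigma_iUnion_pi {m : ℕ} {f : ℕ → Set α} (h : ∀ k, f k ∈ PiPointclass α m) :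
    (⋃ k, f k) ∈ SigmaPointclass α (m+1) := ⟨f, h, rfl⟩

theorem pi_iInter_sigma {m : ℕ} {f : ℕ → Set α} (h : ∀ k, f k ∈ SigmaPointclass α m) :
    (⋂ k, f k) ∈ PiPointclass α (m+1) := by
  unfold PiPointclass
  rw [Set.mem_setOf_eq, Set.compl_iInter]
  exact ⟨fun k => (f k)ᶜ, fun k => by rw [compl_compl]; exact h k, rfl⟩

theorem pi_univ (m : ℕ) : (Set.univ : Set α) ∈ PiPointclass α m :=
  clopen_pi isClopen_univ m

theorem iInter_clopen_pi {f : ℕ → Set α} (h : ∀ c, IsClopen (f c)) (m : ℕ) :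
    (⋂ c, f c) ∈ PiPointclass α m := by
  unfold PiPointclass
  rw [Set.mem_setOf_eq, Set.compl_iInter]
  exact sigma_iUnion fun c => clopen_sigma (h c).compl m

theorem iInter_clopen_compl_sigma {f : ℕ → Set α} (h : ∀ c, IsClopen (f c)) (m : ℕ) :
    (⋂ c, f c)ᶜ ∈ SigmaPointclass α m := iInter_clopen_pi h m

end Pointclass

section Topology
variable {n : ℕ}

theorem cont_ext {β : Type*} [TopologicalSpace β] {f : β → ↥(XSet n)}
    (hf : Continuous f) (a b c : ℕ) : Continuous fun p => extFin (f p).1 a b c := by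
  by_cases h : a < n
  · have e : (fun p => extFin (f p).1 a b c) = fun p => (f p).1 ⟨a, h⟩ b c := by
      funext p; simp [extFin, h]
    rw [e]
    exact (continuous_apply c).comp ((continuous_apply b).comp
      ((continuous_apply (⟨a, h⟩ : Fin n)).comp (continuous_subtype_val.comp hf)))
  · have e : (fun p => extFin (f p).1 a b c) = fun _ => true := by
      funext p; simp [extFin, h]
    rw [e]; exact continuous_const

theorem isClopen_bit {β : Type*} [TopologicalSpace β] {f : β → ↥(XSet n)} (hf : Continuous f)
    (a b c : ℕ) : IsClopen {p : β | extFin (f p).1 a b c = true} :=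
  (isClopen_discrete {true}).preimage (cont_ext hf a b c)

theorem isClopen_eqb {β : Type*} [TopologicalSpace β] {f g : β → Bool} (hf : Continuous f)
    (hg : Continuous g) : IsClopen {p | f p = g p} :=
  (isClopen_discrete {q : Bool × Bool | q.1 = q.2}).preimage (hf.prodMk hg)

theorem eqFun_pi {β : Type*} [TopologicalSpace β] {f g : β → ℕ → Bool}
    (hf : ∀ c, Continuous fun p => f p c) (hg : ∀ c, Continuous fun p => g p c) (m : ℕ) :
    {p | f p = g p} ∈ PiPointclass β m := by
  have e : {p | f p = g p} = ⋂ c, {p | f p c = g p c} := by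
    ext p; simp [funext_iff]
  rw [e]
  exact iInter_clopen_pi (fun c => isClopen_eqb (hf c) (hg c)) m

theorem pi_compl_sigma {β : Type*} [TopologicalSpace β] {s : Set β} {m : ℕ}
    (h : s ∈ PiPointclass β m) : sᶜ ∈ SigmaPointclass β m := h

theorem QSet_pi : ∀ m t : ℕ, m + 1 ≤ t → ∀ k l : ℕ,
    {p : ↥(XSet n) × ↥(XSet n) | Q (extFin p.1.1) (extFin p.2.1) m k l} ∈
      PiPointclass (↥(XSet n) × ↥(XSet n)) t := by
  intro m
  induction m with
  | zero =>
    intro t ht k l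
    obtain ⟨t, rfl⟩ : ∃ t', t = t' + 1 := ⟨t-1, by omega⟩
    have e : {p : ↥(XSet n) × ↥(XSet n) | Q (extFin p.1.1) (extFin p.2.1) 0 k l} =
        (⋂ i, ({p : ↥(XSet n) × ↥(XSet n) | extFin p.1.1 1 k i = true}ᶜ ∪
          ⋂ j, ({p : ↥(XSet n) × ↥(XSet n) | extFin p.2.1 0 j = extFin p.1.1 0 i}ᶜ ∪
            {p : ↥(XSet n) × ↥(XSet n) | extFin p.2.1 1 l j = true}))) ∩
        (⋂ j, ({p : ↥(XSet n) × ↥(XSet n) | extFin p.2.1 1 l j = true}ᶜ ∪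
          ⋂ i, ({p : ↥(XSet n) × ↥(XSet n) | extFin p.1.1 0 i = extFin p.2.1 0 j}ᶜ ∪
            {p : ↥(XSet n) × ↥(XSet n) | extFin p.1.1 1 k i = true}))) := by
      ext p
      simp only [Q, Set.mem_inter_iff, Set.mem_iInter, Set.mem_union, Set.mem_compl_iff,
        Set.mem_setOf_eq, ← imp_iff_not_or]
    rw [e]
    apply pi_inter
    · apply pi_iInter; intro i
      apply pi_union_clopen (isClopen_bit continuous_fst 1 k i).compl
      apply pi_iInter_sigma; intro j
      apply sigma_union
      · exact pi_compl_sigma (eqFun_pi (fun c => cont_ext continuous_snd 0 j c)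
          (fun c => cont_ext continuous_fst 0 i c) t)
      · exact clopen_sigma (isClopen_bit continuous_snd 1 l j) t
    · apply pi_iInter; intro j
      apply pi_union_clopen (isClopen_bit continuous_snd 1 l j).compl
      apply pi_iInter_sigma; intro i
      apply sigma_union
      · exact pi_compl_sigma (eqFun_pi (fun c => cont_ext continuous_fst 0 i c)
          (fun c => cont_ext continuous_snd 0 j c) t)
      · exact clopen_sigma (isClopen_bit continuous_fst 1 k i) t
  | succ m ih =>
    intro t ht k l
    obtain ⟨t, rfl⟩ : ∃ t', t = t' + 1 := ⟨t-1, by omega⟩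
    have e : {p : ↥(XSet n) × ↥(XSet n) | Q (extFin p.1.1) (extFin p.2.1) (m+1) k l} =
        (⋂ i, ({p : ↥(XSet n) × ↥(XSet n) | extFin p.1.1 (m+2) k i = true}ᶜ ∪
          ⋂ j, ({p : ↥(XSet n) × ↥(XSet n) | Q (extFin p.1.1) (extFin p.2.1) m i j}ᶜ ∪
            {p : ↥(XSet n) × ↥(XSet n) | extFin p.2.1 (m+2) l j = true}))) ∩
        (⋂ j, ({p : ↥(XSet n) × ↥(XSet n) | extFin p.2.1 (m+2) l j = true}ᶜ ∪
          ⋂ i, ({p : ↥(XSet n) × ↥(XSet n) | Q (extFin p.1.1) (extFin p.2.1) m i j}ᶜ ∪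
            {p : ↥(XSet n) × ↥(XSet n) | extFin p.1.1 (m+2) k i = true}))) := by
      ext p
      simp only [Q, Set.mem_inter_iff, Set.mem_iInter, Set.mem_union, Set.mem_compl_iff,
        Set.mem_setOf_eq, ← imp_iff_not_or]
    rw [e]
    apply pi_inter
    · apply pi_iInter; intro i
      apply pi_union_clopen (isClopen_bit continuous_fst (m+2) k i).compl
      apply pi_iInter_sigma; intro j
      apply sigma_union
      · exact pi_compl_sigma (ih t (by omega) i j)
      · exact clopen_sigma (isClopen_bit continuous_snd (m+2) l j) t
    · apply pi_iInter; intro j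
      apply pi_union_clopen (isClopen_bit continuous_snd (m+2) l j).compl
      apply pi_iInter_sigma; intro i
      apply sigma_union
      · exact pi_compl_sigma (ih t (by omega) i j)
      · exact clopen_sigma (isClopen_bit continuous_fst (m+2) k i) t

end Topology


/-- `F_n` is a `Π^0_{n+2}` subset of `X_n × X_n`. -/
theorem Ffin_Pi0_nplus2 (n : ℕ) (hn : 1 ≤ n) :
    {p : ↥(XSet n) × ↥(XSet n) | Ffin n p.1.1 p.2.1} ∈
      PiPointclass (↥(XSet n) × ↥(XSet n)) (n + 1) := by
  obtain ⟨N, rfl⟩ : ∃ N, n = N + 1 := ⟨n-1, by omega⟩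
  have e : {p : ↥(XSet (N+1)) × ↥(XSet (N+1)) | Ffin (N+1) p.1.1 p.2.1} =
      (((⋂ k, ⋃ l, {p : ↥(XSet (N+1)) × ↥(XSet (N+1)) |
          extFin p.2.1 0 l = extFin p.1.1 0 k}) ∩
        (⋂ l, ⋃ k, {p : ↥(XSet (N+1)) × ↥(XSet (N+1)) |
          extFin p.1.1 0 k = extFin p.2.1 0 l})) ∩
       ⋂ m, {p : ↥(XSet (N+1)) × ↥(XSet (N+1)) | m < N →
          ((∀ k, ∃ l, Q (extFin p.1.1) (extFin p.2.1) m k l) ∧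
           (∀ l, ∃ k, Q (extFin p.1.1) (extFin p.2.1) m k l))}) := by
    ext p
    simp only [Set.mem_setOf_eq, Set.mem_inter_iff, Set.mem_iInter, Set.mem_iUnion]
    rw [main_iff (by omega) p.1.2 p.2.2]
    simp only [Nat.add_sub_cancel]
  rw [e]
  show _ ∈ PiPointclass _ (N+2)
  apply pi_inter
  · apply pi_inter
    · apply pi_iInter_sigma; intro k
      apply sigma_iUnion_pi; intro l
      exact eqFun_pi (fun c => cont_ext continuous_snd 0 l c)
        (fun c => cont_ext continuous_fst 0 k c) N
    · apply pi_iInter_sigma; intro l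
      apply sigma_iUnion_pi; intro k
      exact eqFun_pi (fun c => cont_ext continuous_fst 0 k c)
        (fun c => cont_ext continuous_snd 0 l c) N
  · apply pi_iInter; intro m
    by_cases hm : m < N
    · have e2 : {p : ↥(XSet (N+1)) × ↥(XSet (N+1)) | m < N →
          ((∀ k, ∃ l, Q (extFin p.1.1) (extFin p.2.1) m k l) ∧
           (∀ l, ∃ k, Q (extFin p.1.1) (extFin p.2.1) m k l))} =
          (⋂ k, ⋃ l, {p : ↥(XSet (N+1)) × ↥(XSet (N+1)) |
             Q (extFin p.1.1) (extFin p.2.1) m k l}) ∩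
          (⋂ l, ⋃ k, {p : ↥(XSet (N+1)) × ↥(XSet (N+1)) |
             Q (extFin p.1.1) (extFin p.2.1) m k l}) := by
        ext p
        simp only [Set.mem_setOf_eq, Set.mem_inter_iff, Set.mem_iInter, Set.mem_iUnion,
          hm, true_implies]
      rw [e2]
      apply pi_inter
      · apply pi_iInter_sigma; intro k
        apply sigma_iUnion_pi; intro l
        exact QSet_pi m N (by omega) k l
      · apply pi_iInter_sigma; intro l
        apply sigma_iUnion_pi; intro k
        exact QSet_pi m N (by omega) k l
    · have e2 : {p : ↥(XSet (N+1)) × ↥(XSet (N+1)) | m < N →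
          ((∀ k, ∃ l, Q (extFin p.1.1) (extFin p.2.1) m k l) ∧
           (∀ l, ∃ k, Q (extFin p.1.1) (extFin p.2.1) m k l))} = Set.univ := by
        ext p
        simp [hm]
      rw [e2]
      exact pi_univ _
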